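/- arXiv:1712.02848 — 5 statements merged into one kernel-verified Lean document; each statement's English description precedes it below -/
import Mathlib

section
/- Let H be a complex Hilbert space, let J = [c,d] be a compact subinterval of [0,∞), let (a_λ)_{λ∈Λ} be a net (indexed by a nonempty directed set Λ) of maps from J to B(H) each of whose values is a contraction (operator norm at most 1), and let a : J → B(H) be a map whose values are all isometries and which is strongly continuous (t ↦ a(t)η is continuous for each η ∈ H). Suppose that for all ζ, η ∈ H the scalar functions t ↦ ⟨ζ, a_λ(t)η⟩ converge to t ↦ ⟨ζ, a(t)η⟩ uniformly on J along the net. Then for every η ∈ H the functions t ↦ a_λ(t)η converge to t ↦ a(t)η uniformly on J along the net, i.e. sup_{t∈J} ‖a_λ(t)η − a(t)η‖ → 0. -/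
open Filter Topology

noncomputable section

theorem weak_to_strong_uniform_convergence
    {H : Type*} [NormedAddCommGroup H] [InnerProductSpace ℂ H] [CompleteSpace H]
    {Λ : Type*} [Nonempty Λ] [Preorder Λ] [IsDirected Λ (· ≤ ·)]
    (c d : ℝ) (hc : 0 ≤ c) (hcd : c ≤ d)
    (aNet : Λ → ℝ → H →L[ℂ] H) (a : ℝ → H →L[ℂ] H)
    (haNet_contr : ∀ lam : Λ, ∀ t ∈ Set.Icc c d, ‖aNet lam t‖ ≤ 1)
    (ha_isom : ∀ t ∈ Set.Icc c d, ∀ η : H, ‖a t η‖ = ‖η‖)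
    (ha_strong_cont : ∀ η : H, ContinuousOn (fun t => a t η) (Set.Icc c d))
    (hweak : ∀ ζ η : H,
      TendstoUniformlyOn (fun (lam : Λ) (t : ℝ) => (inner ℂ ζ (aNet lam t η) : ℂ))
        (fun t => (inner ℂ ζ (a t η) : ℂ)) atTop (Set.Icc c d)) :
    ∀ η : H,
      TendstoUniformlyOn (fun (lam : Λ) (t : ℝ) => aNet lam t η)
        (fun t => a t η) atTop (Set.Icc c d) := by
  intro η
  rw [Metric.tendstoUniformlyOn_iff]
  intro ε hε
  set K : Set H := (fun t => a t η) '' Set.Icc c d with hKdef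
  have hKc : IsCompact K := isCompact_Icc.image_of_continuousOn (ha_strong_cont η)
  set δ : ℝ := ε ^ 2 / (8 * (‖η‖ + 1)) with hδdef
  have hδ : 0 < δ := by positivity
  obtain ⟨T, hTfin, hTsub⟩ := Metric.totallyBounded_iff.mp hKc.totallyBounded δ hδ
  have hev : ∀ᶠ lam in atTop, ∀ ζ ∈ T, ∀ t ∈ Set.Icc c d,
      dist ((inner ℂ ζ (a t η) : ℂ)) (inner ℂ ζ (aNet lam t η)) < ε ^ 2 / 8 := by
    rw [Filter.eventually_all_finite hTfin]
    intro ζ _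
    exact Metric.tendstoUniformlyOn_iff.mp (hweak ζ η) (ε ^ 2 / 8) (by positivity)
  filter_upwards [hev] with lam hlam t ht
  set x := aNet lam t η with hxdef
  set y := a t η with hydef
  have hyK : y ∈ K := ⟨t, ht, rfl⟩
  obtain ⟨ζ, hζT, hζ⟩ := Set.mem_iUnion₂.mp (hTsub hyK)
  rw [Metric.mem_ball] at hζ
  have hxn : ‖x‖ ≤ ‖η‖ := by
    calc ‖x‖ ≤ ‖aNet lam t‖ * ‖η‖ := (aNet lam t).le_opNorm η
    _ ≤ 1 * ‖η‖ := by
        have := haNet_contr lam t ht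
        have := norm_nonneg η
        nlinarith
    _ = ‖η‖ := one_mul _
  have hyn : ‖y‖ = ‖η‖ := ha_isom t ht η
  -- key inner ℂ product estimates
  have h1 : ‖x - y‖ ^ 2 ≤ 2 * RCLike.re ((inner ℂ y (y - x) : ℂ)) := by
    have hsq : ‖x - y‖ ^ 2 = ‖x‖ ^ 2 - 2 * RCLike.re ((inner ℂ x y : ℂ)) + ‖y‖ ^ 2 :=
      @norm_sub_sq ℂ H _ _ _ x y
    have hsym : RCLike.re ((inner ℂ x y : ℂ)) = RCLike.re ((inner ℂ y x : ℂ)) :=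
      inner_re_symm x y
    have hself : RCLike.re ((inner ℂ y y : ℂ)) = ‖y‖ ^ 2 := @inner_self_eq_norm_sq ℂ H _ _ _ y
    have hsub : (inner ℂ y (y - x) : ℂ) = inner ℂ y y - inner ℂ y x := inner_sub_right y y x
    have hxle : ‖x‖ ^ 2 ≤ ‖y‖ ^ 2 := by
      rw [hyn]; exact pow_le_pow_left₀ (norm_nonneg x) hxn 2
    rw [hsub]
    simp only [map_sub, hself]
    rw [hsq, hsym]
    linarith
  have h2 : RCLike.re ((inner ℂ y (y - x) : ℂ)) ≤ ‖(inner ℂ y (y - x) : ℂ)‖ :=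
    RCLike.re_le_norm _
  have h3 : (inner ℂ y (y - x) : ℂ) = inner ℂ (y - ζ) (y - x) + inner ℂ ζ (y - x) := by
    rw [← inner_add_left, sub_add_cancel]
  have h4 : ‖(inner ℂ (y - ζ) (y - x) : ℂ)‖ ≤ δ * (2 * ‖η‖) := by
    calc ‖(inner ℂ (y - ζ) (y - x) : ℂ)‖ ≤ ‖y - ζ‖ * ‖y - x‖ := norm_inner_le_norm _ _
    _ ≤ δ * (2 * ‖η‖) := by
        have h5 : ‖y - x‖ ≤ 2 * ‖η‖ := by
          calc ‖y - x‖ ≤ ‖y‖ + ‖x‖ := norm_sub_le _ _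
          _ ≤ 2 * ‖η‖ := by rw [hyn]; linarith
        have h6 : ‖y - ζ‖ < δ := by rwa [← dist_eq_norm]
        have : (0:ℝ) ≤ ‖y - x‖ := norm_nonneg _
        nlinarith
  have h7 : ‖(inner ℂ ζ (y - x) : ℂ)‖ < ε ^ 2 / 8 := by
    have := hlam ζ hζT t ht
    rwa [dist_eq_norm, ← inner_sub_right] at this
  have hkey : ‖x - y‖ ^ 2 < ε ^ 2 := by
    have hle : ‖(inner ℂ y (y - x) : ℂ)‖ ≤ δ * (2 * ‖η‖) + ε ^ 2 / 8 := by
      rw [h3]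
      calc ‖(inner ℂ (y - ζ) (y - x) : ℂ) + (inner ℂ ζ (y - x) : ℂ)‖
          ≤ ‖(inner ℂ (y - ζ) (y - x) : ℂ)‖ + ‖(inner ℂ ζ (y - x) : ℂ)‖ := norm_add_le _ _
        _ ≤ δ * (2 * ‖η‖) + ε ^ 2 / 8 := by linarith
    have hδη : δ * (2 * ‖η‖) ≤ ε ^ 2 / 4 := by
      rw [hδdef]
      rw [div_mul_eq_mul_div, div_le_div_iff₀ (by positivity) (by norm_num)]
      have := norm_nonneg η
      nlinarith [sq_nonneg ε]
    have hε2 : 0 < ε ^ 2 := by positivity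
    linarith
  have : ‖x - y‖ < ε := lt_of_pow_lt_pow_left₀ 2 hε.le hkey
  rw [dist_eq_norm]
  rwa [norm_sub_rev] at this
end
end

section
/- Let K be a complex Hilbert space, P an orthogonal projection on K, and for h > 0 let s_h(T) := S_h T S_h where S_h := h^{-1/2}(I − P) + P. Let F₁, F₂ ∈ B(K), let G₁(h), G₂(h) ∈ B(K) for each h > 0, let H' and H'' be complex Hilbert spaces, and let V ∈ B(K; H') and W ∈ B(H''; K) be bounded operators. If ‖V·(s_h(G₁(h) − I) − F₁)‖ → 0 and ‖(s_h(G₂(h) − I) − F₂)·W‖ → 0 as h → 0, then ‖V·(s_h(G₁(h)G₂(h) − I) − F₁ ◁ F₂)·W‖ → 0 as h → 0, where F₁ ◁ F₂ := F₁ + F₂ + F₁ P F₂. -/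
open ContinuousLinearMap Filter Topology

noncomputable section

/-- The operator `S_h = h^{-1/2}(I - P) + P`. -/
def scaleOp {K : Type*} [NormedAddCommGroup K] [InnerProductSpace ℂ K]
    (P : K →L[ℂ] K) (h : ℝ) : K →L[ℂ] K :=
  ((Real.sqrt h : ℂ))⁻¹ • (1 - P) + P

/-- The scaling map `s_h(T) = S_h T S_h`. -/
def scal {K : Type*} [NormedAddCommGroup K] [InnerProductSpace ℂ K]
    (P : K →L[ℂ] K) (h : ℝ) (T : K →L[ℂ] K) : K →L[ℂ] K :=
  scaleOp P h * T * scaleOp P h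

/-- The series product `F₁ ◁ F₂ = F₁ + F₂ + F₁ P F₂`. -/
def seriesProd {K : Type*} [NormedAddCommGroup K] [InnerProductSpace ℂ K]
    (P : K →L[ℂ] K) (F₁ F₂ : K →L[ℂ] K) : K →L[ℂ] K :=
  F₁ + F₂ + F₁ * P * F₂

lemma SDS {K : Type*} [NormedAddCommGroup K] [InnerProductSpace ℂ K]
    (P : K →L[ℂ] K) (hP2 : P * P = P) (h : ℝ) (hh : 0 < h) :
    scaleOp P h * (P + (h:ℂ) • (1 - P)) * scaleOp P h = 1 := by
  unfold scaleOp
  have hs : (Real.sqrt h : ℂ) * (Real.sqrt h : ℂ) = (h : ℂ) := by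
    rw [← Complex.ofReal_mul, Real.mul_self_sqrt hh.le]
  have hne : (h : ℂ) ≠ 0 := by exact_mod_cast hh.ne'
  have hc : ((Real.sqrt h : ℂ))⁻¹ * ((h:ℂ) * ((Real.sqrt h : ℂ))⁻¹) = 1 := by
    rw [mul_comm (h:ℂ), ← mul_assoc, ← mul_inv, hs, inv_mul_cancel₀ hne]
  have hQ : ((1 - P) : K →L[ℂ] K) * (1 - P) = 1 - P := by
    simp [mul_sub, sub_mul, hP2]
  have hPQ : P * ((1 - P) : K →L[ℂ] K) = 0 := by simp [mul_sub, hP2]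
  have hQP : ((1 - P) : K →L[ℂ] K) * P = 0 := by simp [sub_mul, hP2]
  simp only [mul_add, add_mul, smul_mul_assoc, mul_smul_comm, smul_smul, hQ, hPQ, hQP, hP2,
    smul_zero, zero_mul, mul_zero, add_zero, zero_add, hc, one_smul]
  abel

lemma keyIdentity {K : Type*} [NormedAddCommGroup K] [InnerProductSpace ℂ K]
    (P : K →L[ℂ] K) (hP2 : P * P = P) (h : ℝ) (hh : 0 < h)
    (F₁ F₂ G₁ G₂ : K →L[ℂ] K) :
    scal P h (G₁ * G₂ - 1) - seriesProd P F₁ F₂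
      = (scal P h (G₁ - 1) - F₁) + (scal P h (G₂ - 1) - F₂)
        + (scal P h (G₁ - 1) - F₁) * (P * scal P h (G₂ - 1))
        + F₁ * (P * (scal P h (G₂ - 1) - F₂))
        + (h:ℂ) • (scal P h (G₁ - 1) * ((1 - P) * scal P h (G₂ - 1))) := by
  set S := scaleOp P h with hS
  set D : K →L[ℂ] K := P + (h:ℂ) • (1 - P) with hD
  have hSDS : S * D * S = 1 := SDS P hP2 h hh
  have step1 : G₁ * G₂ - 1 = (G₁ - 1) + (G₂ - 1) + (G₁ - 1) * (G₂ - 1) := by noncomm_ring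
  have step2 : scal P h (G₁ * G₂ - 1)
      = scal P h (G₁ - 1) + scal P h (G₂ - 1) + scal P h (G₁ - 1) * D * scal P h (G₂ - 1) := by
    unfold scal
    rw [step1]
    have e1 : S * (G₁ - 1) * S * D * (S * (G₂ - 1) * S)
        = (S * (G₁ - 1)) * ((S * D * S) * ((G₂ - 1) * S)) := by noncomm_ring
    rw [e1, hSDS, one_mul]
    noncomm_ring
  rw [step2, hD]
  unfold seriesProd
  simp only [mul_add, add_mul, sub_mul, mul_sub, smul_add, mul_smul_comm, smul_mul_assoc,
    mul_assoc, mul_one, one_mul]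
  abel

theorem composition_of_qrw_generators_compressed
    {K : Type*} [NormedAddCommGroup K] [InnerProductSpace ℂ K] [CompleteSpace K]
    {H' H'' : Type*} [NormedAddCommGroup H'] [InnerProductSpace ℂ H'] [CompleteSpace H']
    [NormedAddCommGroup H''] [InnerProductSpace ℂ H''] [CompleteSpace H'']
    (P : K →L[ℂ] K) (hP : IsSelfAdjoint P) (hP2 : P * P = P)
    (F₁ F₂ : K →L[ℂ] K) (G₁ G₂ : ℝ → K →L[ℂ] K)
    (V : K →L[ℂ] H') (W : H'' →L[ℂ] K)
    (h1 : Tendsto (fun h : ℝ => ‖V ∘L (scal P h (G₁ h - 1) - F₁)‖) (𝓝[>] 0) (𝓝 0))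
    (h2 : Tendsto (fun h : ℝ => ‖(scal P h (G₂ h - 1) - F₂) ∘L W‖) (𝓝[>] 0) (𝓝 0)) :
    Tendsto
      (fun h : ℝ => ‖V ∘L (scal P h (G₁ h * G₂ h - 1) - seriesProd P F₁ F₂) ∘L W‖)
      (𝓝[>] 0) (𝓝 0) := by
  have hh0 : Tendsto (fun h : ℝ => h) (𝓝[>] 0) (𝓝 0) :=
    tendsto_id.mono_left nhdsWithin_le_nhds
  set c₂ : ℝ := ‖F₂ ∘L W‖ with hc₂
  set cV : ℝ := ‖V ∘L F₁‖ with hcV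
  set q : ℝ := ‖((1 : K →L[ℂ] K) - P)‖ with hq
  set a : ℝ → ℝ := fun h => ‖V ∘L (scal P h (G₁ h - 1) - F₁)‖ with ha
  set b : ℝ → ℝ := fun h => ‖(scal P h (G₂ h - 1) - F₂) ∘L W‖ with hb
  have hbound : Tendsto (fun h : ℝ =>
      a h * ‖W‖ + ‖V‖ * b h + a h * (‖P‖ * (b h + c₂)) + (cV * ‖P‖) * b h
        + h * ((a h + cV) * (q * (b h + c₂)))) (𝓝[>] 0) (𝓝 0) := by
    have T : Tendsto (fun h : ℝ =>
        a h * ‖W‖ + ‖V‖ * b h + a h * (‖P‖ * (b h + c₂)) + (cV * ‖P‖) * b h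
          + h * ((a h + cV) * (q * (b h + c₂)))) (𝓝[>] 0)
        (𝓝 (0 * ‖W‖ + ‖V‖ * 0 + 0 * (‖P‖ * (0 + c₂)) + (cV * ‖P‖) * 0
          + 0 * ((0 + cV) * (q * (0 + c₂))))) :=
      ((((h1.mul_const ‖W‖).add (h2.const_mul ‖V‖)).add
        (h1.mul (((h2.add_const c₂).const_mul ‖P‖)))).add
        (h2.const_mul (cV * ‖P‖))).add
        (hh0.mul (((h1.add_const cV).mul ((h2.add_const c₂).const_mul q))))
    simpa using T
  refine squeeze_zero' (Eventually.of_forall fun h => norm_nonneg _) ?_ hbound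
  filter_upwards [self_mem_nhdsWithin] with h hh
  have hhpos : (0:ℝ) < h := hh
  set X : K →L[ℂ] K := scal P h (G₁ h - 1) with hX
  set Y : K →L[ℂ] K := scal P h (G₂ h - 1) with hY
  set A : K →L[ℂ] K := X - F₁ with hA
  set B : K →L[ℂ] K := Y - F₂ with hB
  have edec : V ∘L (scal P h (G₁ h * G₂ h - 1) - seriesProd P F₁ F₂) ∘L W
      = (V ∘L A) ∘L W + V ∘L (B ∘L W) + (V ∘L A) ∘L (P ∘L (Y ∘L W))
        + ((V ∘L F₁) ∘L P) ∘L (B ∘L W)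
        + (h:ℂ) • ((V ∘L X) ∘L (((1 : K →L[ℂ] K) - P) ∘L (Y ∘L W))) := by
    rw [keyIdentity P hP2 h hhpos F₁ F₂ (G₁ h) (G₂ h)]
    ext x
    simp only [hA, hB]
    simp [mul_apply', coe_comp', Function.comp, map_sub]
    rfl
  rw [edec]
  have hYW : ‖Y ∘L W‖ ≤ b h + c₂ := by
    have e : Y ∘L W = B ∘L W + F₂ ∘L W := by
      rw [← add_comp, hB, sub_add_cancel]
    rw [e]; exact norm_add_le _ _
  have hVX : ‖V ∘L X‖ ≤ a h + cV := by
    have e : V ∘L X = V ∘L A + V ∘L F₁ := by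
      rw [← comp_add, hA, sub_add_cancel]
    rw [e]; exact norm_add_le _ _
  have t1 : ‖(V ∘L A) ∘L W‖ ≤ a h * ‖W‖ := opNorm_comp_le _ _
  have t2 : ‖V ∘L (B ∘L W)‖ ≤ ‖V‖ * b h := opNorm_comp_le _ _
  have t3 : ‖(V ∘L A) ∘L (P ∘L (Y ∘L W))‖ ≤ a h * (‖P‖ * (b h + c₂)) := by
    refine (opNorm_comp_le _ _).trans ?_
    refine mul_le_mul_of_nonneg_left ?_ (norm_nonneg _)
    exact (opNorm_comp_le _ _).trans (mul_le_mul_of_nonneg_left hYW (norm_nonneg _))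
  have t4 : ‖((V ∘L F₁) ∘L P) ∘L (B ∘L W)‖ ≤ (cV * ‖P‖) * b h := by
    refine (opNorm_comp_le _ _).trans ?_
    exact mul_le_mul_of_nonneg_right (opNorm_comp_le _ _) (norm_nonneg _)
  have t5 : ‖(h:ℂ) • ((V ∘L X) ∘L (((1 : K →L[ℂ] K) - P) ∘L (Y ∘L W)))‖
      ≤ h * ((a h + cV) * (q * (b h + c₂))) := by
    refine (opNorm_smul_le ((h:ℂ)) _).trans ?_
    rw [Complex.norm_real, Real.norm_of_nonneg hhpos.le]
    refine mul_le_mul_of_nonneg_left ?_ hhpos.le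
    refine (opNorm_comp_le _ _).trans ?_
    refine mul_le_mul hVX ?_ (norm_nonneg _) (by positivity)
    exact (opNorm_comp_le _ _).trans (mul_le_mul_of_nonneg_left hYW (norm_nonneg _))
  calc ‖(V ∘L A) ∘L W + V ∘L (B ∘L W) + (V ∘L A) ∘L (P ∘L (Y ∘L W))
        + ((V ∘L F₁) ∘L P) ∘L (B ∘L W)
        + (h:ℂ) • ((V ∘L X) ∘L (((1 : K →L[ℂ] K) - P) ∘L (Y ∘L W)))‖
      ≤ a h * ‖W‖ + ‖V‖ * b h + a h * (‖P‖ * (b h + c₂)) + (cV * ‖P‖) * b h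
        + h * ((a h + cV) * (q * (b h + c₂))) := by
        refine (norm_add_le _ _).trans (add_le_add ?_ t5)
        refine (norm_add_le _ _).trans (add_le_add ?_ t4)
        refine (norm_add_le _ _).trans (add_le_add ?_ t3)
        exact (norm_add_le _ _).trans (add_le_add t1 t2)
end
end

section
/- Let K be a complex Hilbert space, P an orthogonal projection on K, and for h > 0 let s_h(T) := S_h T S_h where S_h := h^{-1/2}(I − P) + P. Let F₁, F₂ ∈ B(K) and let G₁(h), G₂(h) ∈ B(K) for each h > 0. If ‖s_h(G₁(h) − I) − F₁‖ → 0 and ‖s_h(G₂(h) − I) − F₂‖ → 0 as h → 0, then ‖s_h(G₁(h)G₂(h) − I) − F₁ ◁ F₂‖ → 0 as h → 0, where F₁ ◁ F₂ := F₁ + F₂ + F₁ P F₂. -/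
open ContinuousLinearMap Filter Topology

noncomputable section

lemma key_inv {K : Type*} [NormedAddCommGroup K] [InnerProductSpace ℂ K]
    (P : K →L[ℂ] K) (hP2 : P * P = P) {h : ℝ} (hh : 0 < h) :
    scaleOp P h * (((h : ℂ)) • (1 - P) + P) * scaleOp P h = 1 := by
  have hEP : (1 - P) * P = 0 := by simp [sub_mul, hP2]
  have hPE : P * (1 - P) = 0 := by simp [mul_sub, hP2]
  have hE2 : (1 - P) * (1 - P) = 1 - P := by simp [mul_sub, sub_mul, hP2]
  have hc : ((Real.sqrt h : ℂ))⁻¹ * ((h : ℂ) * ((Real.sqrt h : ℂ))⁻¹) = 1 := by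
    have h0 : (Real.sqrt h : ℂ) ≠ 0 := by
      simpa using (Real.sqrt_pos.mpr hh).ne'
    field_simp
    norm_cast
    rw [Real.sq_sqrt hh.le]
  simp only [scaleOp, mul_add, add_mul, smul_mul_assoc, mul_smul_comm, smul_smul,
    hEP, hPE, hE2, hP2, smul_zero, zero_mul, mul_zero, add_zero, zero_add]
  rw [hc, one_smul, sub_add_cancel]

lemma scal_mul {K : Type*} [NormedAddCommGroup K] [InnerProductSpace ℂ K]
    (P : K →L[ℂ] K) (hP2 : P * P = P) {h : ℝ} (hh : 0 < h) (T₁ T₂ : K →L[ℂ] K) :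
    scal P h (T₁ * T₂) = scal P h T₁ * (((h : ℂ)) • (1 - P) + P) * scal P h T₂ := by
  have h4 : ∀ X : K →L[ℂ] K,
      scaleOp P h * ((((h : ℂ)) • (1 - P) + P) * (scaleOp P h * X)) = X := fun X => by
    rw [← mul_assoc, ← mul_assoc, key_inv P hP2 hh, one_mul]
  simp only [scal, mul_assoc]
  rw [h4]

theorem composition_of_qrw_generators
    {K : Type*} [NormedAddCommGroup K] [InnerProductSpace ℂ K] [CompleteSpace K]
    (P : K →L[ℂ] K) (hP : IsSelfAdjoint P) (hP2 : P * P = P)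
    (F₁ F₂ : K →L[ℂ] K) (G₁ G₂ : ℝ → K →L[ℂ] K)
    (h1 : Tendsto (fun h : ℝ => ‖scal P h (G₁ h - 1) - F₁‖) (𝓝[>] 0) (𝓝 0))
    (h2 : Tendsto (fun h : ℝ => ‖scal P h (G₂ h - 1) - F₂‖) (𝓝[>] 0) (𝓝 0)) :
    Tendsto (fun h : ℝ => ‖scal P h (G₁ h * G₂ h - 1) - seriesProd P F₁ F₂‖)
      (𝓝[>] 0) (𝓝 0) := by
  set Q : ℝ → K →L[ℂ] K := fun h => ((h : ℂ)) • (1 - P) + P with hQdef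
  have hA : Tendsto (fun h : ℝ => scal P h (G₁ h - 1)) (𝓝[>] 0) (𝓝 F₁) :=
    tendsto_iff_norm_sub_tendsto_zero.mpr h1
  have hB : Tendsto (fun h : ℝ => scal P h (G₂ h - 1)) (𝓝[>] 0) (𝓝 F₂) :=
    tendsto_iff_norm_sub_tendsto_zero.mpr h2
  have hQ : Tendsto Q (𝓝[>] 0) (𝓝 P) := by
    have hcoe : Tendsto (fun h : ℝ => (h : ℂ)) (𝓝[>] 0) (𝓝 0) := by
      simpa using (Complex.continuous_ofReal.tendsto 0).mono_left nhdsWithin_le_nhds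
    have := (hcoe.smul_const ((1 : K →L[ℂ] K) - P)).add_const P
    rw [zero_smul, zero_add] at this; exact this
  have hprod : Tendsto
      (fun h : ℝ => scal P h (G₁ h - 1) + scal P h (G₂ h - 1)
        + scal P h (G₁ h - 1) * Q h * scal P h (G₂ h - 1))
      (𝓝[>] 0) (𝓝 (seriesProd P F₁ F₂)) := by
    exact (hA.add hB).add ((hA.mul hQ).mul hB)
  have heq : ∀ᶠ h : ℝ in 𝓝[>] 0,
      scal P h (G₁ h * G₂ h - 1)
        = scal P h (G₁ h - 1) + scal P h (G₂ h - 1)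
          + scal P h (G₁ h - 1) * Q h * scal P h (G₂ h - 1) := by
    filter_upwards [self_mem_nhdsWithin] with h hh
    have hsplit : G₁ h * G₂ h - 1 = (G₁ h - 1) + (G₂ h - 1) + (G₁ h - 1) * (G₂ h - 1) := by
      noncomm_ring
    have hadd : ∀ T₁ T₂ : K →L[ℂ] K, scal P h (T₁ + T₂) = scal P h T₁ + scal P h T₂ := by
      intro T₁ T₂; simp [scal, mul_add, add_mul]
    rw [hsplit, hadd, hadd, scal_mul P hP2 hh]
  have hmain : Tendsto (fun h : ℝ => scal P h (G₁ h * G₂ h - 1) - seriesProd P F₁ F₂)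
      (𝓝[>] 0) (𝓝 0) := by
    have := (hprod.congr' (heq.mono fun x hx => hx.symm)).sub_const (seriesProd P F₁ F₂)
    simpa using this
  simpa using hmain.norm
end
end

section
/- Let K be a complex Hilbert space, P an orthogonal projection on K, s_h(T) := S_h T S_h with S_h := h^{-1/2}(I − P) + P for h > 0, and let Q ∈ B(K). Suppose (P(h,n))_{h>0, n∈ℕ} is a family in B(K) such that ‖n·s_h(P(h,n) − I) − Q‖ → 0 along the product filter of (h → 0 within (0,∞)) and (n → ∞). Then ‖s_h(P(h,n)ⁿ − I) − F[Q]‖ → 0 along the same product filter, where F[Q] := Q + Q·P·e₂(PQP)·P·Q is the Holevo transform of Q. -/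
open ContinuousLinearMap Filter Topology

noncomputable section

/-- `e₂(T) = ∑_{n≥0} Tⁿ/(n+2)!`. -/
def e2 {K : Type*} [NormedAddCommGroup K] [InnerProductSpace ℂ K]
    (T : K →L[ℂ] K) : K →L[ℂ] K :=
  ∑' n : ℕ, (((n + 2).factorial : ℂ))⁻¹ • T ^ n

/-- The Holevo transform `F[Q] = Q + Q·P·e₂(PQP)·P·Q`. -/
def holevo {K : Type*} [NormedAddCommGroup K] [InnerProductSpace ℂ K]
    (P : K →L[ℂ] K) (Q : K →L[ℂ] K) : K →L[ℂ] K :=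
  Q + Q * P * e2 (P * Q * P) * P * Q

/-! ### Auxiliary algebraic lemmas -/

section RingLemmas

open Finset

variable {R : Type*} [Ring R] [Algebra ℂ R]

omit [Algebra ℂ R] in
lemma aux_h1 (P : R) (hP2 : P * P = P) : (1 - P) * (1 - P) = 1 - P := by
  rw [sub_mul, one_mul, mul_sub, mul_one, hP2, sub_self, sub_zero]

omit [Algebra ℂ R] in
lemma aux_h2 (P : R) (hP2 : P * P = P) : (1 - P) * P = 0 := by
  rw [sub_mul, one_mul, hP2, sub_self]

omit [Algebra ℂ R] in
lemma aux_h3 (P : R) (hP2 : P * P = P) : P * (1 - P) = 0 := by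
  rw [mul_sub, mul_one, hP2, sub_self]

lemma aux_ST (P : R) (hP2 : P * P = P) {c : ℂ} (hc : c ≠ 0) :
    (c⁻¹ • (1 - P) + P) * (c • (1 - P) + P) = 1 := by
  rw [add_mul, mul_add, mul_add, smul_mul_assoc, smul_mul_assoc, mul_smul_comm,
    mul_smul_comm, smul_smul, inv_mul_cancel₀ hc, aux_h1 P hP2, aux_h2 P hP2,
    aux_h3 P hP2, hP2]
  simp

lemma aux_TS (P : R) (hP2 : P * P = P) {c : ℂ} (hc : c ≠ 0) :
    (c • (1 - P) + P) * (c⁻¹ • (1 - P) + P) = 1 := by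
  rw [add_mul, mul_add, mul_add, smul_mul_assoc, smul_mul_assoc, mul_smul_comm,
    mul_smul_comm, smul_smul, mul_inv_cancel₀ hc, aux_h1 P hP2, aux_h2 P hP2,
    aux_h3 P hP2, hP2]
  simp

lemma aux_TT (P : R) (hP2 : P * P = P) (c : ℂ) :
    (c • (1 - P) + P) * (c • (1 - P) + P) = (c * c) • (1 - P) + P := by
  rw [add_mul, mul_add, mul_add, smul_mul_assoc, smul_mul_assoc, mul_smul_comm,
    mul_smul_comm, smul_smul, aux_h1 P hP2, aux_h2 P hP2, aux_h3 P hP2, hP2]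
  simp

omit [Algebra ℂ R] in
lemma aux_sandwich_pow (S T x : R) (hST : S * T = 1) (hTS : T * S = 1) (k : ℕ) :
    S * (T * x * T) ^ (k + 1) * S = x * ((T * T) * x) ^ k := by
  have key : ∀ k, (T * x * T) ^ (k + 1) = T * (x * ((T * T) * x) ^ k) * T := by
    intro k
    induction k with
    | zero => simp [pow_succ]
    | succ k ih =>
      rw [pow_succ, ih, pow_succ]
      noncomm_ring
  rw [key k, ← mul_assoc, ← mul_assoc, hST, one_mul, mul_assoc, hTS, mul_one]

omit [Algebra ℂ R] in
lemma aux_PQP (P Q : R) (hP2 : P * P = P) (k : ℕ) :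
    Q * P * ((P * Q * P) ^ k * (P * Q)) = Q * (P * Q) ^ (k + 1) := by
  have hPP : P * (P * Q * P) = P * Q * P := by
    rw [show P * Q * P = P * (Q * P) from mul_assoc _ _ _, ← mul_assoc P P, hP2]
  have key : ∀ k, P * ((P * Q * P) ^ k * (P * Q)) = (P * Q) ^ (k + 1) := by
    intro k
    induction k with
    | zero => rw [pow_zero, one_mul, zero_add, pow_one, ← mul_assoc, hP2]
    | succ k ih =>
      rw [pow_succ', mul_assoc (P * Q * P), ← mul_assoc P, hPP, pow_succ', ← ih,
        mul_assoc (P * Q)]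
  rw [mul_assoc Q P, key k]

end RingLemmas

/-! ### Auxiliary scalar lemmas -/

section ScalarLemmas

open Finset

lemma aux_descFactorial_cast (n k : ℕ) :
    (n.descFactorial k : ℝ) = (k.factorial : ℝ) * n.choose k := by
  exact_mod_cast congrArg (Nat.cast : ℕ → ℝ) (Nat.descFactorial_eq_factorial_mul_choose n k)

lemma aux_choose_div_pow_le (n k : ℕ) (hn : 1 ≤ n) :
    (n.choose k : ℝ) / (n : ℝ) ^ k ≤ (k.factorial : ℝ)⁻¹ := by
  have hnp : (0:ℝ) < (n:ℝ) ^ k := by positivity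
  have hkf : (0:ℝ) < (k.factorial : ℝ) := by positivity
  have hle : (k.factorial : ℝ) * n.choose k ≤ (n:ℝ) ^ k := by
    rw [← aux_descFactorial_cast]
    exact_mod_cast Nat.descFactorial_le_pow n k
  rw [div_le_iff₀ hnp]
  rw [inv_mul_eq_div, le_div_iff₀ hkf] at *
  nlinarith [hle]

lemma aux_choose_div_pow_tendsto (k : ℕ) :
    Tendsto (fun n : ℕ => (n.choose k : ℝ) / (n : ℝ) ^ k) atTop
      (𝓝 ((k.factorial : ℝ)⁻¹)) := by
  have hprod : Tendsto (fun n : ℕ => ∏ i ∈ range k, (1 - (i : ℝ) / n)) atTop (𝓝 1) := by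
    have := tendsto_finset_prod (range k)
      (fun i _ => (show Tendsto (fun n : ℕ => 1 - (i : ℝ) / n) atTop (𝓝 (1 - 0)) from
        tendsto_const_nhds.sub (tendsto_const_div_atTop_nhds_zero_nat (i : ℝ))))
    simpa using this
  have hmain : Tendsto (fun n : ℕ => (k.factorial : ℝ)⁻¹ * ∏ i ∈ range k, (1 - (i : ℝ) / n))
      atTop (𝓝 ((k.factorial : ℝ)⁻¹)) := by
    simpa using tendsto_const_nhds.mul hprod
  refine hmain.congr' ?_
  filter_upwards [eventually_ge_atTop (max 1 k)] with n hn
  have hn1 : 1 ≤ n := le_trans (le_max_left 1 k) hn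
  have hnk : k ≤ n := le_trans (le_max_right 1 k) hn
  have hn0 : (n : ℝ) ≠ 0 := by positivity
  have hdesc : (n.descFactorial k : ℝ) = ∏ i ∈ range k, ((n : ℝ) - i) := by
    rw [Nat.descFactorial_eq_prod_range]
    push_cast
    refine Finset.prod_congr rfl fun i hi => ?_
    rw [Nat.cast_sub (le_trans (le_of_lt (mem_range.mp hi)) hnk)]
  have hstep : ∏ i ∈ range k, (1 - (i : ℝ) / n) = (n.descFactorial k : ℝ) / (n : ℝ) ^ k := by
    calc ∏ i ∈ range k, (1 - (i : ℝ) / n)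
        = ∏ i ∈ range k, (((n : ℝ) - i) / n) :=
          Finset.prod_congr rfl fun i _ => by rw [one_sub_div hn0]
      _ = (∏ i ∈ range k, ((n : ℝ) - i)) / (n : ℝ) ^ k := by
          rw [prod_div_distrib, prod_const, card_range]
      _ = (n.descFactorial k : ℝ) / (n : ℝ) ^ k := by rw [hdesc]
  rw [hstep, aux_descFactorial_cast]
  have hkf : (k.factorial : ℝ) ≠ 0 := by positivity
  field_simp

end ScalarLemmas

/-! ### Auxiliary operator lemmas -/

section OperatorLemmas

variable {K : Type*} [NormedAddCommGroup K] [InnerProductSpace ℂ K] [CompleteSpace K]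

lemma aux_norm_pow_le (T : K →L[ℂ] K) (n : ℕ) : ‖T ^ n‖ ≤ ‖T‖ ^ n := by
  induction n with
  | zero => simp only [pow_zero]; exact norm_id_le
  | succ n ih =>
    rw [pow_succ, pow_succ]
    exact le_trans (norm_mul_le _ _) (mul_le_mul_of_nonneg_right ih (norm_nonneg T))

lemma aux_norm_mul_pow_le (X Y : K →L[ℂ] K) (k : ℕ) :
    ‖X * (Y * X) ^ k‖ ≤ ‖X‖ * (‖Y‖ * ‖X‖) ^ k := by
  refine le_trans (norm_mul_le _ _) (mul_le_mul_of_nonneg_left ?_ (norm_nonneg X))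
  refine le_trans (aux_norm_pow_le (Y * X) k) ?_
  exact pow_le_pow_left₀ (norm_nonneg _) (norm_mul_le Y X) k

lemma aux_inv_fact_le (k j : ℕ) : (((k + j).factorial : ℝ))⁻¹ ≤ ((k.factorial : ℝ))⁻¹ := by
  apply inv_anti₀
  · exact_mod_cast Nat.factorial_pos k
  · exact_mod_cast Nat.factorial_le (Nat.le_add_right k j)

lemma aux_summable_coeff (T : K →L[ℂ] K) (j : ℕ) :
    Summable (fun n : ℕ => (((n + j).factorial : ℂ))⁻¹ • T ^ n) := by
  apply Summable.of_norm_bounded (Real.summable_pow_div_factorial ‖T‖)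
  intro n
  rw [norm_smul, norm_inv]
  have h1 : ‖(((n + j).factorial : ℂ))‖ = (((n + j).factorial : ℝ)) := by norm_cast
  rw [h1, div_eq_inv_mul]
  exact mul_le_mul (aux_inv_fact_le n j) (aux_norm_pow_le T n) (norm_nonneg _)
    (by positivity)

lemma aux_summable_g (P Q : K →L[ℂ] K) :
    Summable (fun k : ℕ => (((k + 1).factorial : ℂ))⁻¹ • (Q * (P * Q) ^ k)) := by
  refine Summable.of_norm_bounded (g :=
    (fun k : ℕ => ‖Q‖ * ((‖P‖ * ‖Q‖) ^ k / k.factorial))) ?_ ?_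
  · exact (Real.summable_pow_div_factorial (‖P‖ * ‖Q‖)).mul_left ‖Q‖
  · intro k
    rw [norm_smul, norm_inv]
    have h1 : ‖(((k + 1).factorial : ℂ))‖ = (((k + 1).factorial : ℝ)) := by norm_cast
    rw [h1]
    calc (((k + 1).factorial : ℝ))⁻¹ * ‖Q * (P * Q) ^ k‖
        ≤ ((k.factorial : ℝ))⁻¹ * (‖Q‖ * (‖P‖ * ‖Q‖) ^ k) :=
          mul_le_mul (aux_inv_fact_le k 1) (aux_norm_mul_pow_le Q P k) (norm_nonneg _)
            (by positivity)
      _ = ‖Q‖ * ((‖P‖ * ‖Q‖) ^ k / k.factorial) := by ring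

lemma aux_holevo_eq (P Q : K →L[ℂ] K) (hP2 : P * P = P) :
    holevo P Q = ∑' k : ℕ, (((k + 1).factorial : ℂ))⁻¹ • (Q * (P * Q) ^ k) := by
  rw [Summable.tsum_eq_zero_add (aux_summable_g P Q)]
  have h0 : (((0 + 1).factorial : ℂ))⁻¹ • (Q * (P * Q) ^ 0) = Q := by simp
  rw [h0]
  unfold holevo
  congr 1
  set φ : (K →L[ℂ] K) →L[ℂ] (K →L[ℂ] K) :=
    ContinuousLinearMap.mulLeftRight ℂ (K →L[ℂ] K) (Q * P) (P * Q) with hφ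
  have hmap : Q * P * e2 (P * Q * P) * P * Q = φ (e2 (P * Q * P)) := by
    rw [hφ, ContinuousLinearMap.mulLeftRight_apply, mul_assoc (Q * P * e2 (P * Q * P)) P Q]
  rw [hmap, e2, φ.map_tsum (aux_summable_coeff (P * Q * P) 2)]
  refine tsum_congr fun k => ?_
  rw [map_smul, hφ, ContinuousLinearMap.mulLeftRight_apply,
    mul_assoc (Q * P), aux_PQP P Q hP2 k]

end OperatorLemmas

theorem scaled_powers_converge_to_holevo_transform
    {K : Type*} [NormedAddCommGroup K] [InnerProductSpace ℂ K] [CompleteSpace K]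
    (P : K →L[ℂ] K) (hP : IsSelfAdjoint P) (hP2 : P * P = P)
    (Q : K →L[ℂ] K) (Phn : ℝ → ℕ → K →L[ℂ] K)
    (hcgce : Tendsto (fun p : ℝ × ℕ => ‖(p.2 : ℂ) • scal P p.1 (Phn p.1 p.2 - 1) - Q‖)
      ((𝓝[>] (0:ℝ)) ×ˢ (atTop : Filter ℕ)) (𝓝 0)) :
    Tendsto (fun p : ℝ × ℕ => ‖scal P p.1 (Phn p.1 p.2 ^ p.2 - 1) - holevo P Q‖)
      ((𝓝[>] (0:ℝ)) ×ˢ (atTop : Filter ℕ)) (𝓝 0) := by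
  classical
  set l : Filter (ℝ × ℕ) := (𝓝[>] (0:ℝ)) ×ˢ (atTop : Filter ℕ) with hl
  set A : ℝ × ℕ → K →L[ℂ] K := fun p => (p.2 : ℂ) • scal P p.1 (Phn p.1 p.2 - 1) with hA_def
  set M : ℝ → K →L[ℂ] K := fun t => ((t : ℂ)) • (1 - P) + P with hM_def
  set c : ℝ × ℕ → ℕ → ℂ :=
    fun p k => (((p.2.choose (k+1) : ℝ) / (p.2 : ℝ) ^ (k+1) : ℝ) : ℂ) with hc_def
  set G : ℝ × ℕ → ℕ → K →L[ℂ] K :=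
    fun p k => c p k • (A p * (M p.1 * A p) ^ k) with hG_def
  set g : ℕ → K →L[ℂ] K :=
    fun k => (((k + 1).factorial : ℂ))⁻¹ • (Q * (P * Q) ^ k) with hg_def
  have hA : Tendsto A l (𝓝 Q) := tendsto_iff_norm_sub_tendsto_zero.mpr hcgce
  have hM : Tendsto (fun p : ℝ × ℕ => M p.1) l (𝓝 P) := by
    have h1 : Tendsto M (𝓝 (0:ℝ)) (𝓝 P) := by
      have : Tendsto (fun t : ℝ => ((t : ℂ)) • (1 - P) + P) (𝓝 (0:ℝ))
          (𝓝 (((0:ℝ) : ℂ) • (1 - P) + P)) := by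
        exact ((Complex.continuous_ofReal.tendsto 0).smul tendsto_const_nhds).add
          tendsto_const_nhds
      simpa only [Complex.ofReal_zero, zero_smul, zero_add] using this
    exact (h1.mono_left nhdsWithin_le_nhds).comp tendsto_fst
  -- pointwise limits
  have hck : ∀ k, Tendsto (fun p : ℝ × ℕ => c p k) l (𝓝 ((((k+1).factorial : ℂ))⁻¹)) := by
    intro k
    have hreal := aux_choose_div_pow_tendsto (k+1)
    have hcplx := (Complex.continuous_ofReal.tendsto _).comp hreal
    have h3 := hcplx.comp (tendsto_snd : Tendsto Prod.snd l atTop)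
    have h2 : Complex.ofReal ((((k+1).factorial : ℝ))⁻¹) = (((k+1).factorial : ℂ))⁻¹ := by
      push_cast
      ring
    rw [hc_def, ← h2]
    exact h3
  have hGk : ∀ k, Tendsto (fun p => G p k) l (𝓝 (g k)) := by
    intro k
    exact (hck k).smul (hA.mul ((hM.mul hA).pow k))
  -- dominating bound
  set C : ℝ := ‖Q‖ + 1 with hC_def
  set D : ℝ := ‖P‖ + 1 with hD_def
  have hC1 : (1:ℝ) ≤ C := by rw [hC_def]; linarith [norm_nonneg Q]
  have hD1 : (1:ℝ) ≤ D := by rw [hD_def]; linarith [norm_nonneg P]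
  set bound : ℕ → ℝ := fun k => C * ((C * D) ^ k / k.factorial) with hbound_def
  have h_sum : Summable bound := (Real.summable_pow_div_factorial (C * D)).mul_left C
  have h_bound : ∀ᶠ p in l, ∀ k, ‖G p k‖ ≤ bound k := by
    have eA : ∀ᶠ p in l, ‖A p‖ ≤ C := by
      have := hA.norm
      exact this.eventually_le_const (by simp [hC_def])
    have eM : ∀ᶠ p in l, ‖M p.1‖ ≤ D := by
      have := hM.norm
      exact this.eventually_le_const (by simp [hD_def])
    have eN : ∀ᶠ p in l, 1 ≤ p.2 := by
      rw [hl]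
      exact (eventually_ge_atTop 1).prod_inr _
    filter_upwards [eA, eM, eN] with p hpA hpM hpN
    intro k
    have hAnn : (0:ℝ) ≤ ‖A p‖ := norm_nonneg _
    have hc_norm : ‖c p k‖ ≤ (((k+1).factorial : ℝ))⁻¹ := by
      rw [hc_def]
      rw [Complex.norm_real, Real.norm_eq_abs, abs_of_nonneg (by positivity)]
      exact aux_choose_div_pow_le p.2 (k+1) hpN
    have hop : ‖A p * (M p.1 * A p) ^ k‖ ≤ C * (D * C) ^ k := by
      refine le_trans (aux_norm_mul_pow_le (A p) (M p.1) k) ?_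
      have h1 : ‖M p.1‖ * ‖A p‖ ≤ D * C :=
        mul_le_mul hpM hpA hAnn (by linarith)
      exact mul_le_mul hpA (pow_le_pow_left₀ (by positivity) h1 k) (by positivity)
        (by linarith)
    calc ‖G p k‖ = ‖c p k‖ * ‖A p * (M p.1 * A p) ^ k‖ := by rw [hG_def, norm_smul]
      _ ≤ (((k+1).factorial : ℝ))⁻¹ * (C * (D * C) ^ k) :=
          mul_le_mul hc_norm hop (norm_nonneg _) (by positivity)
      _ ≤ ((k.factorial : ℝ))⁻¹ * (C * (D * C) ^ k) :=
          mul_le_mul_of_nonneg_right (aux_inv_fact_le k 1) (by positivity)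
      _ = bound k := by rw [hbound_def]; rw [mul_comm D C]; ring
  have hlim : Tendsto (fun p => ∑' k, G p k) l (𝓝 (∑' k, g k)) :=
    tendsto_tsum_of_dominated_convergence h_sum hGk h_bound
  -- eventual equality with the scaled powers
  have heq : ∀ᶠ p in l, (∑' k, G p k) = scal P p.1 (Phn p.1 p.2 ^ p.2 - 1) := by
    have e0 : ∀ᶠ p in l, p.1 ∈ Set.Ioi (0:ℝ) := by
      rw [hl]
      exact (eventually_mem_nhdsWithin).prod_inl _
    have eN : ∀ᶠ p in l, 1 ≤ p.2 := by
      rw [hl]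
      exact (eventually_ge_atTop 1).prod_inr _
    filter_upwards [e0, eN] with p hp hn
    obtain ⟨h, n⟩ := p
    simp only [Set.mem_Ioi] at hp
    dsimp only at hp hn ⊢
    -- notation
    set ch : ℂ := ((Real.sqrt h : ℝ) : ℂ) with hch_def
    have hch0 : ch ≠ 0 := by
      rw [hch_def]
      simp only [ne_eq, Complex.ofReal_eq_zero]
      exact ne_of_gt (Real.sqrt_pos.mpr hp)
    set S : K →L[ℂ] K := scaleOp P h with hS_def
    set T : K →L[ℂ] K := ch • (1 - P) + P with hT_def
    have hS_eq : S = ch⁻¹ • (1 - P) + P := rfl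
    have hST : S * T = 1 := by rw [hS_eq, hT_def]; exact aux_ST P hP2 hch0
    have hTS : T * S = 1 := by rw [hS_eq, hT_def]; exact aux_TS P hP2 hch0
    have hTT : T * T = M h := by
      rw [hT_def, aux_TT P hP2 ch, hM_def, hch_def]
      norm_cast
      rw [Real.mul_self_sqrt (le_of_lt hp)]
    have hn0 : ((n : ℂ)) ≠ 0 := by
      simp only [ne_eq, Nat.cast_eq_zero]
      omega
    -- express Phn h n - 1 in terms of A
    set X : K →L[ℂ] K := Phn h n - 1 with hX_def
    have hAX : A (h, n) = (n : ℂ) • (S * X * S) := rfl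
    have hX_eq : X = ((n : ℂ))⁻¹ • (T * A (h, n) * T) := by
      have h4 : T * A (h, n) * T = (n : ℂ) • X := by
        rw [hAX, mul_smul_comm, smul_mul_assoc]
        congr 1
        calc T * (S * X * S) * T = (T * S) * X * (S * T) := by noncomm_ring
          _ = X := by rw [hTS, hST, one_mul, mul_one]
      rw [h4, smul_smul, inv_mul_cancel₀ hn0, one_smul]
    -- binomial expansion
    have hbin : Phn h n ^ n - 1 =
        ∑ m ∈ Finset.range n, (n.choose (m+1) : ℂ) • X ^ (m+1) := by
      have hcomm : Commute X (1 : K →L[ℂ] K) := Commute.one_right X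
      have h1 : Phn h n = X + 1 := by rw [hX_def]; abel
      rw [h1, hcomm.add_pow, Finset.sum_range_succ']
      simp only [pow_zero, one_pow, one_mul, mul_one, Nat.choose_zero_right, Nat.cast_one]
      rw [add_sub_cancel_right]
      refine Finset.sum_congr rfl fun m _ => ?_
      rw [Nat.cast_smul_eq_nsmul ℂ, nsmul_eq_mul]
      exact ((Nat.cast_commute (n.choose (m+1)) (X ^ (m+1))).eq).symm
    have hc_elem : ∀ (p : ℝ × ℕ) (k : ℕ),
        c p k = (((p.2.choose (k+1) : ℝ) / (p.2 : ℝ) ^ (k+1) : ℝ) : ℂ) := fun p k => rfl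
    have hG_elem : ∀ (p : ℝ × ℕ) (k : ℕ),
        G p k = c p k • (A p * (M p.1 * A p) ^ k) := fun p k => rfl
    have hGm : ∀ m, G (h, n) m =
        ((n.choose (m+1) : ℂ) * (((n : ℂ))⁻¹) ^ (m+1)) • (A (h, n) * (M h * A (h, n)) ^ m) := by
      intro m
      have hsc : c (h, n) m = (n.choose (m+1) : ℂ) * (((n : ℂ))⁻¹) ^ (m+1) := by
        rw [hc_elem]
        push_cast
        rw [inv_pow]
        ring
      rw [hG_elem, hsc]
    have hscal : scal P h (Phn h n ^ n - 1) = ∑ m ∈ Finset.range n, G (h, n) m := by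
      have hunf : scal P h (Phn h n ^ n - 1) = S * (Phn h n ^ n - 1) * S := rfl
      rw [hunf, hbin, Finset.mul_sum, Finset.sum_mul]
      refine Finset.sum_congr rfl fun m _ => ?_
      rw [hX_eq, smul_pow, mul_smul_comm, smul_mul_assoc, mul_smul_comm, smul_mul_assoc,
        aux_sandwich_pow S T (A (h, n)) hST hTS m, hTT, smul_smul, hGm m]
    rw [hscal]
    refine tsum_eq_sum ?_
    intro k hk
    have hnk : n < k + 1 := by
      have := Finset.mem_range.not.mp hk
      omega
    rw [hG_elem, hc_elem, Nat.choose_eq_zero_of_lt hnk]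
    simp
  have final : Tendsto (fun p : ℝ × ℕ => scal P p.1 (Phn p.1 p.2 ^ p.2 - 1)) l
      (𝓝 (holevo P Q)) := by
    rw [aux_holevo_eq P Q hP2]
    exact hlim.congr' heq
  exact tendsto_iff_norm_sub_tendsto_zero.mp final
end
end

section
/- Let H be a complex Hilbert space, let a ∈ B(H), and for each h > 0 let a(h) ∈ B(H). Suppose ‖a(h) − a‖ → 0 as h → 0. Then for every T ≥ 0, sup { ‖(I + h·a(h))^{⌊t/h⌋ − ⌊r/h⌋} − exp((t − r)·a)‖ : 0 ≤ r ≤ t ≤ T } → 0 as h → 0. -/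
open ContinuousLinearMap Filter Topology

noncomputable section

set_option linter.unusedSectionVars false

section Aux

variable {A : Type*} [NormedRing A] [NormedAlgebra ℂ A] [CompleteSpace A]

lemma my_exp_tail (hone : ‖(1:A)‖ ≤ 1) (x : A) (m : ℕ) :
    ‖NormedSpace.exp x - ∑ k ∈ Finset.range m, (k.factorial⁻¹ : ℂ) • x ^ k‖ ≤
      ‖x‖ ^ m * Real.exp ‖x‖ := by
  have hsum : Summable (fun k : ℕ => (k.factorial⁻¹ : ℂ) • x ^ k) :=
    NormedSpace.expSeries_summable' x
  have heq : NormedSpace.exp x - ∑ k ∈ Finset.range m, (k.factorial⁻¹ : ℂ) • x ^ k =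
      ∑' n : ℕ, ((n + m).factorial⁻¹ : ℂ) • x ^ (n + m) := by
    rw [NormedSpace.exp_eq_tsum ℂ]
    simp only [← Summable.sum_add_tsum_nat_add m hsum]
    abel
  rw [heq]
  have hnorm : Summable (fun k : ℕ => ‖(k.factorial⁻¹ : ℂ) • x ^ k‖) :=
    NormedSpace.norm_expSeries_summable' x
  have hnorm' : Summable (fun n : ℕ => ‖((n + m).factorial⁻¹ : ℂ) • x ^ (n + m)‖) :=
    (summable_nat_add_iff m).2 hnorm
  have hg : Summable (fun n : ℕ => ‖x‖ ^ m * (‖x‖ ^ n / n.factorial)) :=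
    (Real.summable_pow_div_factorial ‖x‖).mul_left _
  calc ‖∑' n : ℕ, ((n + m).factorial⁻¹ : ℂ) • x ^ (n + m)‖
      ≤ ∑' n : ℕ, ‖((n + m).factorial⁻¹ : ℂ) • x ^ (n + m)‖ := norm_tsum_le_tsum_norm hnorm'
    _ ≤ ∑' n : ℕ, ‖x‖ ^ m * (‖x‖ ^ n / n.factorial) := by
        refine Summable.tsum_le_tsum (fun n => ?_) hnorm' hg
        rw [norm_smul]
        have h1 : ‖((n + m).factorial⁻¹ : ℂ)‖ = (((n + m).factorial : ℝ))⁻¹ := by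
          simp [norm_inv]
        rw [h1]
        have h2 : ‖x ^ (n + m)‖ ≤ ‖x‖ ^ (n + m) := by
          rcases Nat.eq_zero_or_pos (n + m) with hz | hz
          · rw [hz, pow_zero, pow_zero]; exact hone
          · exact norm_pow_le' x hz
        have h3 : (((n + m).factorial : ℝ))⁻¹ ≤ ((n.factorial : ℝ))⁻¹ := by
          apply inv_anti₀
          · exact_mod_cast n.factorial_pos
          · exact_mod_cast Nat.factorial_le (Nat.le_add_right n m)
        have h4 : (0:ℝ) < ((n + m).factorial : ℝ) := by exact_mod_cast (n+m).factorial_pos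
        calc (((n + m).factorial : ℝ))⁻¹ * ‖x ^ (n + m)‖
            ≤ ((n.factorial : ℝ))⁻¹ * ‖x‖ ^ (n + m) := by
              apply mul_le_mul h3 h2 (norm_nonneg _) (by positivity)
          _ = ‖x‖ ^ m * (‖x‖ ^ n / n.factorial) := by
              rw [pow_add]; ring
    _ = ‖x‖ ^ m * Real.exp ‖x‖ := by
        rw [tsum_mul_left, Real.exp_eq_exp_ℝ, NormedSpace.exp_eq_tsum_div]

lemma my_norm_exp_le (hone : ‖(1:A)‖ ≤ 1) (x : A) :
    ‖NormedSpace.exp x‖ ≤ Real.exp ‖x‖ := by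
  have := my_exp_tail hone x 0
  simpa using this

lemma my_norm_exp_sub_one (hone : ‖(1:A)‖ ≤ 1) (x : A) :
    ‖NormedSpace.exp x - 1‖ ≤ ‖x‖ * Real.exp ‖x‖ := by
  have := my_exp_tail hone x 1
  simpa [Finset.sum_range_succ] using this

lemma my_norm_exp_sub_one_sub (hone : ‖(1:A)‖ ≤ 1) (x : A) :
    ‖NormedSpace.exp x - 1 - x‖ ≤ ‖x‖ ^ 2 * Real.exp ‖x‖ := by
  have := my_exp_tail hone x 2
  simpa [Finset.sum_range_succ, sub_sub] using this

lemma my_pow_sub_pow (hone : ‖(1:A)‖ ≤ 1) (x y : A) (M : ℝ) (hM : 1 ≤ M)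
    (hx : ‖x‖ ≤ M) (hy : ‖y‖ ≤ M) (n : ℕ) :
    ‖x ^ n - y ^ n‖ ≤ n * M ^ n * ‖x - y‖ := by
  have hM0 : (0:ℝ) ≤ M := le_trans zero_le_one hM
  induction n with
  | zero => simp
  | succ n ih =>
    have hxn : ‖x ^ n‖ ≤ M ^ n := by
      rcases Nat.eq_zero_or_pos n with hz | hz
      · rw [hz, pow_zero, pow_zero]; exact hone
      · exact le_trans (norm_pow_le' x hz) (pow_le_pow_left₀ (norm_nonneg x) hx n)
    have key : x ^ (n+1) - y ^ (n+1) = x ^ n * (x - y) + (x ^ n - y ^ n) * y := by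
      rw [pow_succ, pow_succ]
      noncomm_ring
    rw [key]
    have hMn : M ^ n ≤ M ^ (n+1) := pow_le_pow_right₀ hM (by omega)
    have hMn0 : (0:ℝ) ≤ M ^ n := pow_nonneg hM0 n
    have h0 : (0:ℝ) ≤ ‖x - y‖ := norm_nonneg _
    calc ‖x ^ n * (x - y) + (x ^ n - y ^ n) * y‖
        ≤ ‖x ^ n * (x - y)‖ + ‖(x ^ n - y ^ n) * y‖ := norm_add_le _ _
      _ ≤ ‖x ^ n‖ * ‖x - y‖ + ‖x ^ n - y ^ n‖ * ‖y‖ := by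
          gcongr <;> exact norm_mul_le _ _
      _ ≤ M ^ n * ‖x - y‖ + (n * M ^ n * ‖x - y‖) * M := by
          gcongr
      _ = M ^ n * ‖x - y‖ + n * M ^ (n+1) * ‖x - y‖ := by
          rw [pow_succ]; ring
      _ ≤ M ^ (n+1) * ‖x - y‖ + n * M ^ (n+1) * ‖x - y‖ := by
          exact add_le_add (mul_le_mul_of_nonneg_right hMn h0) le_rfl
      _ = (↑(n+1)) * M ^ (n+1) * ‖x - y‖ := by push_cast; ring

lemma my_norm_coe_smul (h : ℝ) (x : A) : ‖(h:ℂ) • x‖ = |h| * ‖x‖ := by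
  rw [norm_smul, Complex.norm_real, Real.norm_eq_abs]

lemma key_estimate (hone : ‖(1:A)‖ ≤ 1) (a b : A) (C S h s : ℝ) (hC : ‖a‖ ≤ C)
    (hb : ‖b‖ ≤ C) (h0 : 0 < h) (h1 : h ≤ 1) (n : ℕ) (hnS : (n:ℝ) * h ≤ S)
    (hlow : s - h ≤ (n:ℝ) * h) (hhigh : (n:ℝ) * h ≤ s + h) :
    ‖(1 + (h:ℂ) • b) ^ n - NormedSpace.exp ((s:ℂ) • a)‖ ≤
      Real.exp (S*C) * (S * ‖b - a‖ + S * (C^2 * Real.exp C) * h + (C * Real.exp C) * h) := by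
  let +nondep : NormedAlgebra ℚ A := .restrictScalars ℚ ℂ A
  have hC0 : (0:ℝ) ≤ C := le_trans (norm_nonneg a) hC
  have hS0 : (0:ℝ) ≤ S := le_trans (by positivity) hnS
  set X : A := 1 + (h:ℂ) • b with hX
  set Y : A := 1 + (h:ℂ) • a with hY
  set Z : A := NormedSpace.exp ((h:ℂ) • a) with hZ
  set M : ℝ := Real.exp (h*C) with hM
  have hM1 : (1:ℝ) ≤ M := Real.one_le_exp (by positivity)
  have habs : |h| = h := abs_of_pos h0
  have hXM : ‖X‖ ≤ M := by
    calc ‖X‖ ≤ ‖(1:A)‖ + ‖(h:ℂ) • b‖ := norm_add_le _ _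
      _ ≤ 1 + h * C := by
          rw [my_norm_coe_smul, habs]
          have : h * ‖b‖ ≤ h * C := by gcongr
          linarith
      _ ≤ M := by rw [hM]; linarith [Real.add_one_le_exp (h*C)]
  have hYM : ‖Y‖ ≤ M := by
    calc ‖Y‖ ≤ ‖(1:A)‖ + ‖(h:ℂ) • a‖ := norm_add_le _ _
      _ ≤ 1 + h * C := by
          rw [my_norm_coe_smul, habs]
          have : h * ‖a‖ ≤ h * C := by gcongr
          linarith
      _ ≤ M := by rw [hM]; linarith [Real.add_one_le_exp (h*C)]
  have hZM : ‖Z‖ ≤ M := by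
    refine le_trans (my_norm_exp_le hone _) ?_
    rw [my_norm_coe_smul, habs]
    exact Real.exp_le_exp.2 (by gcongr)
  have hMn : M ^ n ≤ Real.exp (S * C) := by
    rw [hM, ← Real.exp_nat_mul]
    exact Real.exp_le_exp.2 (by nlinarith)
  have hMn0 : (0:ℝ) ≤ M ^ n := pow_nonneg (by linarith) n
  -- step 1
  have step1 : ‖X ^ n - Y ^ n‖ ≤ Real.exp (S*C) * (S * ‖b - a‖) := by
    have hXYd : ‖X - Y‖ = h * ‖b - a‖ := by
      have : X - Y = (h:ℂ) • (b - a) := by rw [hX, hY, smul_sub]; abel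
      rw [this, my_norm_coe_smul, habs]
    calc ‖X ^ n - Y ^ n‖ ≤ n * M ^ n * ‖X - Y‖ :=
          my_pow_sub_pow hone X Y M hM1 hXM hYM n
      _ = ((n:ℝ) * h) * M ^ n * ‖b - a‖ := by rw [hXYd]; ring
      _ ≤ S * Real.exp (S*C) * ‖b - a‖ := by gcongr
      _ = Real.exp (S*C) * (S * ‖b - a‖) := by ring
  -- step 2
  have step2 : ‖Y ^ n - Z ^ n‖ ≤ Real.exp (S*C) * (S * (C^2 * Real.exp C) * h) := by
    have hYZd : ‖Y - Z‖ ≤ h * (h * (C^2 * Real.exp C)) := by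
      have : Y - Z = -(NormedSpace.exp ((h:ℂ) • a) - 1 - (h:ℂ) • a) := by
        rw [hY, hZ]; abel
      rw [this, norm_neg]
      refine le_trans (my_norm_exp_sub_one_sub hone _) ?_
      rw [my_norm_coe_smul, habs]
      have ha2 : ‖a‖^2 ≤ C^2 := pow_le_pow_left₀ (norm_nonneg a) hC 2
      have h2 : (h * ‖a‖)^2 ≤ h * h * C^2 := by
        rw [mul_pow]; nlinarith [sq_nonneg h]
      have h3 : Real.exp (h * ‖a‖) ≤ Real.exp C := by
        refine Real.exp_le_exp.2 ?_
        nlinarith [norm_nonneg a]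
      calc (h * ‖a‖)^2 * Real.exp (h * ‖a‖) ≤ (h * h * C^2) * Real.exp C := by
            refine mul_le_mul h2 h3 (Real.exp_pos _).le (by positivity)
        _ = h * (h * (C^2 * Real.exp C)) := by ring
    calc ‖Y ^ n - Z ^ n‖ ≤ n * M ^ n * ‖Y - Z‖ :=
          my_pow_sub_pow hone Y Z M hM1 hYM hZM n
      _ ≤ n * M ^ n * (h * (h * (C^2 * Real.exp C))) := by gcongr
      _ = ((n:ℝ) * h) * M ^ n * (C^2 * Real.exp C) * h := by ring
      _ ≤ S * Real.exp (S*C) * (C^2 * Real.exp C) * h := by gcongr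
      _ = Real.exp (S*C) * (S * (C^2 * Real.exp C) * h) := by ring
  -- step 3
  have hZn : Z ^ n = NormedSpace.exp (((((n:ℝ) * h : ℝ)):ℂ) • a) := by
    rw [hZ, ← NormedSpace.exp_nsmul]
    congr 1
    rw [← Nat.cast_smul_eq_nsmul ℂ n ((h:ℂ) • a), smul_smul]
    congr 1
    push_cast
    ring
  have step3 : ‖Z ^ n - NormedSpace.exp ((s:ℂ) • a)‖ ≤
      Real.exp (S*C) * ((C * Real.exp C) * h) := by
    set δ : ℝ := s - (n:ℝ) * h with hδ
    have hδabs : |δ| ≤ h := abs_le.2 ⟨by linarith, by linarith⟩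
    have hsplit : NormedSpace.exp ((s:ℂ) • a) =
        NormedSpace.exp ((((n:ℝ) * h : ℝ):ℂ) • a) * NormedSpace.exp ((δ:ℂ) • a) := by
      rw [← NormedSpace.exp_add_of_commute (((Commute.refl a).smul_left _).smul_right _)]
      congr 1
      rw [← add_smul]
      congr 1
      push_cast [hδ]
      ring
    rw [hZn, hsplit]
    have : NormedSpace.exp ((((n:ℝ) * h : ℝ):ℂ) • a) -
        NormedSpace.exp ((((n:ℝ) * h : ℝ):ℂ) • a) * NormedSpace.exp ((δ:ℂ) • a) =
        NormedSpace.exp ((((n:ℝ) * h : ℝ):ℂ) • a) * (1 - NormedSpace.exp ((δ:ℂ) • a)) := by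
      rw [mul_sub, mul_one]
    rw [this]
    have hnhC : ‖(((n:ℝ) * h : ℝ):ℂ) • a‖ ≤ S * C := by
      rw [my_norm_coe_smul]
      have : |(n:ℝ) * h| = (n:ℝ) * h := abs_of_nonneg (by positivity)
      rw [this]
      exact mul_le_mul hnS hC (norm_nonneg a) hS0
    have hfirst : ‖NormedSpace.exp ((((n:ℝ) * h : ℝ):ℂ) • a)‖ ≤ Real.exp (S * C) :=
      le_trans (my_norm_exp_le hone _) (Real.exp_le_exp.2 hnhC)
    have hsecond : ‖(1 : A) - NormedSpace.exp ((δ:ℂ) • a)‖ ≤ (C * Real.exp C) * h := by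
      rw [norm_sub_rev]
      refine le_trans (my_norm_exp_sub_one hone _) ?_
      rw [my_norm_coe_smul]
      have hδC : |δ| * ‖a‖ ≤ h * C :=
        mul_le_mul hδabs hC (norm_nonneg a) h0.le
      have hhC : h * C ≤ C := by nlinarith
      calc |δ| * ‖a‖ * Real.exp (|δ| * ‖a‖) ≤ (h * C) * Real.exp C := by
            refine mul_le_mul hδC (Real.exp_le_exp.2 (le_trans hδC hhC)) (Real.exp_pos _).le (by positivity)
        _ = (C * Real.exp C) * h := by ring
    calc ‖NormedSpace.exp ((((n:ℝ) * h : ℝ):ℂ) • a) * (1 - NormedSpace.exp ((δ:ℂ) • a))‖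
        ≤ ‖NormedSpace.exp ((((n:ℝ) * h : ℝ):ℂ) • a)‖ * ‖1 - NormedSpace.exp ((δ:ℂ) • a)‖ :=
          norm_mul_le _ _
      _ ≤ Real.exp (S * C) * ((C * Real.exp C) * h) := by
          refine mul_le_mul hfirst hsecond (norm_nonneg _) (Real.exp_pos _).le
  calc ‖X ^ n - NormedSpace.exp ((s:ℂ) • a)‖
      ≤ ‖X ^ n - Y ^ n‖ + ‖Y ^ n - Z ^ n‖ + ‖Z ^ n - NormedSpace.exp ((s:ℂ) • a)‖ := by
        have := norm_sub_le_norm_sub_add_norm_sub (X ^ n) (Y ^ n) (NormedSpace.exp ((s:ℂ) • a))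
        have := norm_sub_le_norm_sub_add_norm_sub (Y ^ n) (Z ^ n) (NormedSpace.exp ((s:ℂ) • a))
        linarith
    _ ≤ Real.exp (S*C) * (S * ‖b - a‖) + Real.exp (S*C) * (S * (C^2 * Real.exp C) * h) +
        Real.exp (S*C) * ((C * Real.exp C) * h) := by linarith
    _ = Real.exp (S*C) * (S * ‖b - a‖ + S * (C^2 * Real.exp C) * h + (C * Real.exp C) * h) := by
        ring

end Aux

theorem euler_exponential_formula_locally_uniform
    {H : Type*} [NormedAddCommGroup H] [InnerProductSpace ℂ H] [CompleteSpace H]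
    (a : H →L[ℂ] H) (ah : ℝ → H →L[ℂ] H)
    (hcgce : Tendsto (fun h : ℝ => ‖ah h - a‖) (𝓝[>] 0) (𝓝 0))
    (T : ℝ) (hT : 0 ≤ T) :
    ∀ ε > 0, ∀ᶠ h : ℝ in 𝓝[>] 0, ∀ r t : ℝ, 0 ≤ r → r ≤ t → t ≤ T →
      ‖(1 + (h : ℂ) • ah h) ^ (⌊t / h⌋₊ - ⌊r / h⌋₊) -
        NormedSpace.exp (((t - r : ℝ) : ℂ) • a)‖ < ε := by
  intro ε hε
  have hone : ‖(1 : H →L[ℂ] H)‖ ≤ 1 := ContinuousLinearMap.norm_id_le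
  set C : ℝ := ‖a‖ + 1 with hCdef
  set S : ℝ := T + 1 with hSdef
  set B : ℝ → ℝ := fun h =>
    Real.exp (S*C) * (S * ‖ah h - a‖ + S * (C^2 * Real.exp C) * h + (C * Real.exp C) * h)
    with hBdef
  have hid : Tendsto (fun h : ℝ => h) (𝓝[>] 0) (𝓝 0) :=
    tendsto_id.mono_left nhdsWithin_le_nhds
  have hBt : Tendsto B (𝓝[>] 0) (𝓝 0) := by
    have : Tendsto B (𝓝[>] 0)
        (𝓝 (Real.exp (S*C) * (S * 0 + S * (C^2 * Real.exp C) * 0 + (C * Real.exp C) * 0))) :=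
      (((hcgce.const_mul S).add (hid.const_mul (S * (C^2 * Real.exp C)))).add
        (hid.const_mul (C * Real.exp C))).const_mul _
    simpa using this
  have hev1 : ∀ᶠ h : ℝ in 𝓝[>] 0, B h < ε := hBt.eventually_lt_const hε
  have hev2 : ∀ᶠ h : ℝ in 𝓝[>] 0, ‖ah h - a‖ < 1 := hcgce.eventually_lt_const one_pos
  have hev3 : ∀ᶠ h : ℝ in 𝓝[>] 0, 0 < h := self_mem_nhdsWithin
  have hev4 : ∀ᶠ h : ℝ in 𝓝[>] 0, h < 1 :=
    (eventually_lt_nhds one_pos).filter_mono nhdsWithin_le_nhds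
  filter_upwards [hev1, hev2, hev3, hev4] with h hBh hba hh0 hh1
  intro r t hr hrt htT
  have hCa : ‖a‖ ≤ C := by rw [hCdef]; linarith
  have hCb : ‖ah h‖ ≤ C := by
    have : ‖ah h‖ ≤ ‖a‖ + ‖ah h - a‖ := by
      calc ‖ah h‖ = ‖a + (ah h - a)‖ := by rw [add_sub_cancel]
        _ ≤ ‖a‖ + ‖ah h - a‖ := norm_add_le _ _
    rw [hCdef]; linarith
  have ht0 : 0 ≤ t := le_trans hr hrt
  set p : ℕ := ⌊r / h⌋₊ with hp
  set q : ℕ := ⌊t / h⌋₊ with hq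
  have hpq : p ≤ q := Nat.floor_le_floor (by gcongr)
  have hple : (p:ℝ) ≤ r / h := Nat.floor_le (by positivity)
  have hqle : (q:ℝ) ≤ t / h := Nat.floor_le (by positivity)
  have hpgt : r / h - 1 < (p:ℝ) := Nat.sub_one_lt_floor _
  have hqgt : t / h - 1 < (q:ℝ) := Nat.sub_one_lt_floor _
  have hcast : ((q - p : ℕ) : ℝ) = (q:ℝ) - (p:ℝ) := by
    rw [Nat.cast_sub hpq]
  have e1 : t / h * h = t := div_mul_cancel₀ t (ne_of_gt hh0)
  have e2 : r / h * h = r := div_mul_cancel₀ r (ne_of_gt hh0)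
  have hlow : (t - r) - h ≤ ((q - p : ℕ) : ℝ) * h := by
    rw [hcast]
    nlinarith [mul_le_mul_of_nonneg_right (le_of_lt (sub_lt_sub_right hqgt ((p:ℝ)))) hh0.le,
      mul_le_mul_of_nonneg_right hple hh0.le]
  have hhigh : ((q - p : ℕ) : ℝ) * h ≤ (t - r) + h := by
    rw [hcast]
    nlinarith [mul_le_mul_of_nonneg_right hqle hh0.le,
      mul_le_mul_of_nonneg_right (le_of_lt hpgt) hh0.le]
  have hnS : ((q - p : ℕ) : ℝ) * h ≤ S := by
    rw [hSdef]; linarith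
  refine lt_of_le_of_lt
    (key_estimate hone a (ah h) C S h (t - r) hCa hCb hh0 hh1.le (q - p) hnS hlow hhigh) ?_
  exact hBh
end
end
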